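/- arXiv:2511.07154 — 2 statements merged into one kernel-verified Lean document; each statement's English description precedes it below -/
import Mathlib

section
/- Let z ≥ 1 and ν ≥ 1 be integers. For every positive integer n with n ≤ 2 z^ν, the von Mangoldt function satisfies Λ(n) = ∑_{j=1}^{ν} (-1)^{j-1} binom(ν, j) ∑_{n₁ n₂ ⋯ n_{2j} = n, n_{j+1} ≤ z, ..., n_{2j} ≤ z} (log n₁) μ(n_{j+1}) ⋯ μ(n_{2j}). -/
open Finset ArithmeticFunction
open scoped ArithmeticFunction.zeta

/-- evaluation at `n` as an `AddMonoidHom` -/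
private def evalAM (n : ℕ) : ArithmeticFunction ℝ →+ ℝ where
  toFun f := f n
  map_zero' := rfl
  map_add' _ _ := rfl

private lemma ring_id {R : Type*} [CommRing R] (x : R) (ν : ℕ) :
    1 - (1 - x) ^ ν =
      ∑ j ∈ Finset.range ν, ((-1 : ℤ) ^ j * (ν.choose (j + 1) : ℤ)) • x ^ (j + 1) := by
  have h : (1 - x) ^ ν = ∑ j ∈ Finset.range (ν + 1),
      ((-1 : ℤ) ^ j * (ν.choose j : ℤ)) • x ^ j := by
    rw [sub_eq_add_neg, add_comm, add_pow]
    refine Finset.sum_congr rfl fun j hj => ?_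
    rw [one_pow, mul_one, neg_pow, zsmul_eq_mul]
    push_cast
    ring
  rw [h, Finset.sum_range_succ']
  simp only [pow_zero, Nat.choose_zero_right, Nat.cast_one, mul_one, one_smul, one_zsmul]
  rw [sub_add_eq_sub_sub, sub_sub_cancel_left, ← Finset.sum_neg_distrib]
  refine Finset.sum_congr rfl fun j hj => ?_
  rw [← neg_smul]
  congr 1
  ring

private lemma prod_apply_fma {k : ℕ} (f : Fin k → ArithmeticFunction ℝ) (n : ℕ) :
    (∏ i, f i) n = ∑ d ∈ Nat.finMulAntidiag k n, ∏ i, f i (d i) := by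
  induction k generalizing n with
  | zero =>
    rcases eq_or_ne n 1 with rfl | hn
    · simp [Nat.finMulAntidiag_one]
    · rcases eq_or_ne n 0 with rfl | h0
      · simp
      · simp [Nat.finMulAntidiag_zero_left hn, ArithmeticFunction.one_apply, hn]
  | succ k ih =>
    rw [Fin.prod_univ_succ, ArithmeticFunction.mul_apply]
    have : ∀ x ∈ n.divisorsAntidiagonal,
        f 0 x.1 * (∏ i : Fin k, f i.succ) x.2
          = ∑ e ∈ Nat.finMulAntidiag k x.2, f 0 x.1 * ∏ i : Fin k, f i.succ (e i) := by
      intro x hx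
      rw [ih, Finset.mul_sum]
    rw [Finset.sum_congr rfl this, Finset.sum_sigma']
    refine Finset.sum_nbij' (fun p => Fin.cons p.1.1 p.2)
      (fun d => ⟨(d 0, ∏ i : Fin k, d i.succ), fun i => d i.succ⟩) ?_ ?_ ?_ ?_ ?_
    · rintro ⟨⟨a, b⟩, e⟩ hp
      simp only [Finset.mem_sigma, Nat.mem_divisorsAntidiagonal,
        Nat.mem_finMulAntidiag] at hp
      rw [Nat.mem_finMulAntidiag]
      simp only [Fin.prod_univ_succ, Fin.cons_zero, Fin.cons_succ]
      exact ⟨by rw [hp.2.1]; exact hp.1.1, hp.1.2⟩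
    · intro d hd
      rw [Nat.mem_finMulAntidiag] at hd
      have h0 : ∏ i : Fin k, d i.succ ≠ 0 := by
        intro h
        apply hd.2
        rw [← hd.1, Fin.prod_univ_succ, h, mul_zero]
      simp only [Finset.mem_sigma, Nat.mem_divisorsAntidiagonal, Nat.mem_finMulAntidiag]
      exact ⟨⟨by rw [← hd.1, Fin.prod_univ_succ], hd.2⟩, trivial, h0⟩
    · rintro ⟨⟨a, b⟩, e⟩ hp
      simp only [Finset.mem_sigma, Nat.mem_divisorsAntidiagonal,
        Nat.mem_finMulAntidiag] at hp
      simp only [Fin.cons_zero, Fin.cons_succ, Sigma.mk.inj_iff, Prod.mk.injEq]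
      exact ⟨⟨trivial, hp.2.1⟩, HEq.rfl⟩
    · intro d hd
      exact Fin.cons_self_tail d
    · rintro ⟨⟨a, b⟩, e⟩ hp
      simp only [Fin.prod_univ_succ, Fin.cons_zero, Fin.cons_succ]

/-- Möbius function truncated at `z`. -/
private def muz (z : ℕ) : ArithmeticFunction ℝ :=
  ⟨fun m => if m ≤ z then ((ArithmeticFunction.moebius m : ℤ) : ℝ) else 0, by simp⟩

private lemma muz_apply (z m : ℕ) :
    muz z m = if m ≤ z then ((ArithmeticFunction.moebius m : ℤ) : ℝ) else 0 := rfl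

/-- `1 - ζ * μ_z` vanishes on `[0, z]`. -/
private lemma one_sub_zeta_muz_apply {z m : ℕ} (hm : m ≤ z) :
    ((1 : ArithmeticFunction ℝ) - ↑ζ * muz z) m = 0 := by
  rcases Nat.eq_zero_or_pos m with rfl | hm0
  · simp
  have h1 : (↑ζ * muz z : ArithmeticFunction ℝ) m
      = ((↑ζ * (↑ArithmeticFunction.moebius : ArithmeticFunction ℝ)) m) := by
    rw [ArithmeticFunction.mul_apply, ArithmeticFunction.mul_apply]
    refine Finset.sum_congr rfl fun x hx => ?_
    have hdvd : x.2 ∣ m := Nat.dvd_of_mem_divisors (Nat.snd_mem_divisors_of_mem_antidiagonal hx)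
    have : x.2 ≤ z := le_trans (Nat.le_of_dvd hm0 hdvd) hm
    rw [muz_apply, if_pos this, ArithmeticFunction.intCoe_apply]
  have hsub : ((1 : ArithmeticFunction ℝ) - ↑ζ * muz z) m
      = (1 : ArithmeticFunction ℝ) m - (↑ζ * muz z) m := by
    rw [sub_eq_add_neg, ArithmeticFunction.add_apply, sub_eq_add_neg]
    rfl
  rw [hsub, h1, ArithmeticFunction.coe_zeta_mul_coe_moebius, sub_self]

/-- if `u` vanishes on `[0,z]` then `u^k` vanishes on `[0, z^k]` for `k ≥ 1`. -/
private lemma pow_vanish {z : ℕ} {u : ArithmeticFunction ℝ}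
    (hu : ∀ m, m ≤ z → u m = 0) :
    ∀ k, 1 ≤ k → ∀ m, m ≤ z ^ k → (u ^ k) m = 0 := by
  intro k hk
  induction k, hk using Nat.le_induction with
  | base => intro m hm; rw [pow_one]; exact hu m (by simpa using hm)
  | succ k hk ih =>
    intro m hm
    rw [pow_succ, ArithmeticFunction.mul_apply]
    refine Finset.sum_eq_zero fun x hx => ?_
    rw [Nat.mem_divisorsAntidiagonal] at hx
    by_cases ha : x.1 ≤ z ^ k
    · rw [ih x.1 ha, zero_mul]
    · have hb : x.2 ≤ z := by
        push_neg at ha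
        by_contra hb
        push_neg at hb
        have h1 : (z ^ k + 1) * (z + 1) ≤ x.1 * x.2 := Nat.mul_le_mul ha hb
        rw [hx.1] at h1
        have h2 : m ≤ z ^ k * z := by rw [← pow_succ]; exact hm
        have h3 := h1.trans h2
        have h4 : z ^ k * z + (z ^ k + z + 1) ≤ z ^ k * z + 0 := by
          rw [add_zero]
          calc z ^ k * z + (z ^ k + z + 1) = (z ^ k + 1) * (z + 1) := by ring
            _ ≤ z ^ k * z := h3
        have h5 := Nat.le_of_add_le_add_left h4
        omega
      rw [hu x.2 hb, mul_zero]

private lemma coeff_eq (z j n : ℕ) (hn : 0 < n) :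
    (ArithmeticFunction.log * (↑ζ : ArithmeticFunction ℝ) ^ j * (muz z) ^ (j + 1)) n =
      ∑ f ∈ (Fintype.piFinset (fun _ : Fin (2 * (j + 1)) => Finset.Icc 1 n)).filter
        (fun f => (∏ i, f i) = n ∧ ∀ i : Fin (2 * (j + 1)), j + 1 ≤ (i : ℕ) → f i ≤ z),
        Real.log (f ⟨0, by omega⟩) *
          ∏ i ∈ Finset.univ.filter (fun i : Fin (2 * (j + 1)) => j + 1 ≤ (i : ℕ)),
            ((ArithmeticFunction.moebius (f i) : ℤ) : ℝ) := by
  set m := 2 * (j + 1) with hm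
  set G : ℕ → ArithmeticFunction ℝ :=
    fun i => if i = 0 then ArithmeticFunction.log else if i ≤ j then (↑ζ : ArithmeticFunction ℝ)
      else muz z with hG
  set F : Fin m → ArithmeticFunction ℝ := fun i => G (i : ℕ) with hF
  have hprodF : ∏ i, F i
      = ArithmeticFunction.log * (↑ζ : ArithmeticFunction ℝ) ^ j * (muz z) ^ (j + 1) := by
    have h0 : ∏ i : Fin m, F i = ∏ i ∈ Finset.range m, G i := Fin.prod_univ_eq_prod_range G m
    rw [h0, hm, two_mul, Finset.prod_range_add]
    have h1 : ∏ i ∈ Finset.range (j + 1), G i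
        = (↑ζ : ArithmeticFunction ℝ) ^ j * ArithmeticFunction.log := by
      rw [Finset.prod_range_succ']
      have hc : ∀ i ∈ Finset.range j, G (i + 1) = (↑ζ : ArithmeticFunction ℝ) := by
        intro i hi
        rw [Finset.mem_range] at hi
        have h1 : i + 1 ≠ 0 := Nat.succ_ne_zero i
        have h2 : i + 1 ≤ j := by omega
        simp only [hG, if_neg h1, if_pos h2]
      rw [Finset.prod_congr rfl hc, Finset.prod_const, Finset.card_range]
      congr 1
    have h2 : ∏ i ∈ Finset.range (j + 1), G (j + 1 + i) = (muz z) ^ (j + 1) := by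
      have hc : ∀ i ∈ Finset.range (j + 1), G (j + 1 + i) = muz z := by
        intro i hi
        have h1 : j + 1 + i ≠ 0 := by omega
        have h2 : ¬ (j + 1 + i ≤ j) := by omega
        simp only [hG, if_neg h1, if_neg h2]
      rw [Finset.prod_congr rfl hc, Finset.prod_const, Finset.card_range]
    rw [h1, h2]
    ring
  rw [← hprodF, prod_apply_fma]
  have hset : Nat.finMulAntidiag m n
      = (Fintype.piFinset fun _ : Fin m => Finset.Icc 1 n).filter (fun d => ∏ i, d i = n) := by
    ext d
    simp only [Nat.mem_finMulAntidiag, Finset.mem_filter, Fintype.mem_piFinset, Finset.mem_Icc]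
    constructor
    · rintro ⟨hprod, -⟩
      refine ⟨fun i => ⟨?_, ?_⟩, hprod⟩
      · refine Nat.one_le_iff_ne_zero.2 fun h => hn.ne' ?_
        rw [← hprod]
        exact Finset.prod_eq_zero (Finset.mem_univ i) h
      · rw [← hprod]
        exact Nat.le_of_dvd (by rw [hprod]; exact hn) (Finset.dvd_prod_of_mem d (Finset.mem_univ i))
    · rintro ⟨-, hprod⟩
      exact ⟨hprod, hn.ne'⟩
  rw [hset, Finset.sum_filter, Finset.sum_filter]
  refine Finset.sum_congr rfl fun d hd => ?_
  rw [Fintype.mem_piFinset] at hd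
  simp only [Finset.mem_Icc] at hd
  by_cases hp : ∏ i, d i = n
  · rw [if_pos hp]
    by_cases hall : ∀ i : Fin m, j + 1 ≤ (i : ℕ) → d i ≤ z
    · rw [if_pos ⟨hp, hall⟩,
        ← Finset.prod_filter_mul_prod_filter_not Finset.univ (fun i : Fin m => j + 1 ≤ (i : ℕ))
          (fun i => F i (d i))]
      have ha : ∏ i ∈ Finset.univ.filter (fun i : Fin m => j + 1 ≤ (i : ℕ)), F i (d i)
          = ∏ i ∈ Finset.univ.filter (fun i : Fin m => j + 1 ≤ (i : ℕ)),
              ((ArithmeticFunction.moebius (d i) : ℤ) : ℝ) := by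
        refine Finset.prod_congr rfl fun i hi => ?_
        rw [Finset.mem_filter] at hi
        have hig := hi.2
        have h1 : (i : ℕ) ≠ 0 := by omega
        have h2 : ¬ ((i : ℕ) ≤ j) := by omega
        simp only [hF, hG, if_neg h1, if_neg h2, muz_apply, if_pos (hall i hi.2)]
      have hb : ∏ i ∈ Finset.univ.filter (fun i : Fin m => ¬ j + 1 ≤ (i : ℕ)), F i (d i)
          = Real.log (d ⟨0, by omega⟩) := by
        refine Finset.prod_eq_single_of_mem (⟨0, by omega⟩ : Fin m) ?_ ?_
        · rw [Finset.mem_filter]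
          exact ⟨Finset.mem_univ _, by simp⟩
        · intro i hi hne
          rw [Finset.mem_filter] at hi
          have hig := hi.2
          have hiv : (i : ℕ) ≠ 0 := by
            intro h
            exact hne (Fin.ext (by simpa using h))
          have h2 : (i : ℕ) ≤ j := by omega
          have hne0 : d i ≠ 0 := by have := (hd i).1; omega
          simp only [hF, hG, if_neg hiv, if_pos h2, ArithmeticFunction.natCoe_apply,
            ArithmeticFunction.zeta_apply, if_neg hne0, Nat.cast_one]
      rw [ha, hb, mul_comm]
    · rw [if_neg (fun h => hall h.2)]
      push_neg at hall
      obtain ⟨i0, hi0, hz0⟩ := hall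
      rw [← Finset.prod_filter_mul_prod_filter_not Finset.univ (fun i : Fin m => j + 1 ≤ (i : ℕ))
          (fun i => F i (d i))]
      have hz' : ∏ i ∈ Finset.univ.filter (fun i : Fin m => j + 1 ≤ (i : ℕ)), F i (d i) = 0 := by
        refine Finset.prod_eq_zero (Finset.mem_filter.2 ⟨Finset.mem_univ i0, hi0⟩) ?_
        have h1 : (i0 : ℕ) ≠ 0 := by omega
        have h2 : ¬ ((i0 : ℕ) ≤ j) := by omega
        have h3 : ¬ (d i0 ≤ z) := by omega
        simp only [hF, hG, if_neg h1, if_neg h2, muz_apply, if_neg h3]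
      rw [hz', zero_mul]
  · rw [if_neg hp, if_neg (fun h => hp h.1)]

theorem stmt4 (z ν : ℕ) (hz : 1 ≤ z) (hν : 1 ≤ ν) (n : ℕ) (hn : 0 < n)
    (hn2 : n ≤ 2 * z ^ ν) :
    (ArithmeticFunction.vonMangoldt n : ℝ) =
      ∑ j ∈ Finset.range ν, (-1 : ℝ) ^ j * (ν.choose (j + 1)) *
        ∑ f ∈ (Fintype.piFinset (fun _ : Fin (2 * (j + 1)) => Finset.Icc 1 n)).filter
          (fun f => (∏ i, f i) = n ∧ ∀ i : Fin (2 * (j + 1)), j + 1 ≤ (i : ℕ) → f i ≤ z),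
          Real.log (f ⟨0, by omega⟩) *
            ∏ i ∈ Finset.univ.filter (fun i : Fin (2 * (j + 1)) => j + 1 ≤ (i : ℕ)),
              (ArithmeticFunction.moebius (f i) : ℝ) := by
  set LL : ArithmeticFunction ℝ := ArithmeticFunction.vonMangoldt with hL
  set x : ArithmeticFunction ℝ := ↑ζ * muz z with hx
  have split : LL n = (LL * (1 - (1 - x) ^ ν)) n + (LL * ((1 - x) ^ ν)) n := by
    rw [← ArithmeticFunction.add_apply]
    congr 1
    ring
  have hu : ∀ m, m ≤ z → ((1 : ArithmeticFunction ℝ) - x) m = 0 :=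
    fun m hm => one_sub_zeta_muz_apply hm
  have hrem : (LL * ((1 - x) ^ ν)) n = 0 := by
    rw [ArithmeticFunction.mul_apply]
    refine Finset.sum_eq_zero fun p hp => ?_
    rw [Nat.mem_divisorsAntidiagonal] at hp
    by_cases hb : p.2 ≤ z ^ ν
    · rw [pow_vanish hu ν hν p.2 hb, mul_zero]
    · have hp1 : p.1 = 1 := by
        push_neg at hb
        have h0 : p.1 ≠ 0 := by
          intro h
          apply hp.2
          rw [← hp.1, h, zero_mul]
        by_contra h
        have h2 : 2 ≤ p.1 := by omega
        have h3 : 2 * (z ^ ν + 1) ≤ p.1 * p.2 := Nat.mul_le_mul h2 hb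
        rw [hp.1] at h3
        omega
      rw [hp1, hL, ArithmeticFunction.vonMangoldt_apply_one, zero_mul]
  rw [split, hrem, add_zero]
  have hsum : (LL * (1 - (1 - x) ^ ν)) n
      = ∑ j ∈ Finset.range ν,
          (((-1 : ℤ) ^ j * (ν.choose (j + 1) : ℤ)) • (LL * x ^ (j + 1))) n := by
    rw [ring_id x ν, Finset.mul_sum]
    have hc : ∀ j ∈ Finset.range ν,
        LL * (((-1 : ℤ) ^ j * (ν.choose (j + 1) : ℤ)) • x ^ (j + 1))
          = ((-1 : ℤ) ^ j * (ν.choose (j + 1) : ℤ)) • (LL * x ^ (j + 1)) :=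
      fun j _ => mul_smul_comm _ _ _
    rw [Finset.sum_congr rfl hc]
    exact map_sum (evalAM n) _ _
  rw [hsum]
  refine Finset.sum_congr rfl fun j hj => ?_
  have hLx : LL * x ^ (j + 1)
      = ArithmeticFunction.log * (↑ζ : ArithmeticFunction ℝ) ^ j * (muz z) ^ (j + 1) := by
    have h1 : LL * x ^ (j + 1)
        = (LL * ↑ζ) * ((↑ζ : ArithmeticFunction ℝ) ^ j * (muz z) ^ (j + 1)) := by
      rw [hx]; ring
    rw [h1, hL, ArithmeticFunction.vonMangoldt_mul_zeta, ← mul_assoc]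
  have hz1 : ((((-1 : ℤ) ^ j * (ν.choose (j + 1) : ℤ)) • (LL * x ^ (j + 1))) n)
      = (Int.cast ((-1 : ℤ) ^ j * (ν.choose (j + 1) : ℤ)) : ℝ) * ((LL * x ^ (j + 1)) n) := by
    have := map_zsmul (evalAM n) ((-1 : ℤ) ^ j * (ν.choose (j + 1) : ℤ)) (LL * x ^ (j + 1))
    exact this.trans (zsmul_eq_mul _ _)
  rw [hz1, hLx, coeff_eq z j n hn]
  push_cast
  ring
end

section
/- Let s ≥ 2 be an integer, Δ > 0, and let a₁, …, a_s be real numbers not all of whose contributions vanish (a₁⋯a_s ≠ 0). Let α₁, …, α_s be distinct real numbers, none of which is an integer. If I is a subinterval of [1,2] on which |a₁ t^{α₁} + a₂ t^{α₂} + ⋯ + a_s t^{α_s}| ≤ Δ for all t ∈ I, then the length of I satisfies |I| ≪ (Δ / (|a₁| + ⋯ + |a_s|))^{1/(s-1)}, where the implied constant depends only on s and α₁, …, α_s. -/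
open Set Finset Polynomial

section Aux
variable {s : ℕ}


lemma cascade (φ : ℕ → ℝ → ℝ) (hφ : ∀ m x, HasDerivAt (φ m) (φ (m+1) x) x)
    (Δ h u₀ : ℝ) (hh : 0 < h) (n : ℕ)
    (hbound : ∀ u ∈ Set.Icc u₀ (u₀ + 2^n * h), |φ 0 u| ≤ Δ) :
    ∀ m, m ≤ n → ∃ y : ℕ → ℝ,
      (∀ i < 2^(n-m), y i ∈ Set.Icc u₀ (u₀ + 2^n * h)) ∧
      (∀ i, i+1 < 2^(n-m) → y i + h ≤ y (i+1)) ∧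
      (∀ i < 2^(n-m), |φ m (y i)| ≤ (2/h)^m * Δ) := by
  intro m
  induction m with
  | zero =>
    intro _
    refine ⟨fun i => u₀ + i * h, ?_, ?_, ?_⟩
    · intro i hi
      dsimp only
      constructor
      · nlinarith [Nat.cast_nonneg (α := ℝ) i, hh.le]
      · have : (i : ℝ) ≤ 2^n := by
          have := hi.le
          exact_mod_cast Nat.cast_le.mpr this |>.trans (by push_cast; norm_num)
        nlinarith
    · intro i _
      push_cast
      ring_nf
      linarith
    · intro i hi
      simpa using hbound _ ⟨by nlinarith [Nat.cast_nonneg (α := ℝ) i], by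
        have : (i : ℝ) ≤ 2^n := by exact_mod_cast hi.le
        nlinarith⟩
  | succ m ih =>
    intro hm
    obtain ⟨y, hymem, hygap, hybd⟩ := ih (le_of_lt (Nat.lt_of_succ_le hm))
    have hpow : 2^(n-m) = 2 * 2^(n-(m+1)) := by
      have : n - m = (n - (m+1)) + 1 := by omega
      rw [this]; ring
    have key : ∀ i, ∃ ξ, i < 2^(n-(m+1)) →
        ξ ∈ Set.Ioo (y (2*i)) (y (2*i+1)) ∧
        φ (m+1) ξ = (φ m (y (2*i+1)) - φ m (y (2*i))) / (y (2*i+1) - y (2*i)) := by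
      intro i
      by_cases hi : i < 2^(n-(m+1))
      · have h1 : 2*i+1 < 2^(n-m) := by omega
        have hlt : y (2*i) < y (2*i+1) := by
          have := hygap (2*i) h1
          linarith
        obtain ⟨ξ, hξ, hξeq⟩ := exists_hasDerivAt_eq_slope (φ m) (φ (m+1)) hlt
          (fun x _ => (hφ m x).continuousAt.continuousWithinAt)
          (fun x _ => hφ m x)
        exact ⟨ξ, fun _ => ⟨hξ, by rw [hξeq]⟩⟩
      · exact ⟨0, fun h => absurd h hi⟩
    choose ξ hξ using key
    refine ⟨ξ, ?_, ?_, ?_⟩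
    · intro i hi
      obtain ⟨hmem, _⟩ := hξ i hi
      have h1 : 2*i+1 < 2^(n-m) := by omega
      have h0 : 2*i < 2^(n-m) := by omega
      exact ⟨(hymem _ h0).1.trans hmem.1.le, hmem.2.le.trans (hymem _ h1).2⟩
    · intro i hi
      have hii : i < 2^(n-(m+1)) := by omega
      obtain ⟨hmem, _⟩ := hξ i hii
      obtain ⟨hmem', _⟩ := hξ (i+1) hi
      have hg : y (2*i+1) + h ≤ y (2*i+2) := by
        have := hygap (2*i+1) (by omega)
        simpa [show 2*i+1+1 = 2*i+2 by ring] using this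
      have : y (2*i+2) ≤ y (2*(i+1)) := by norm_num [show 2*(i+1) = 2*i+2 by ring]
      have := hmem'.1
      have h2 : y (2*(i+1)) < ξ (i+1) := hmem'.1
      have : y (2*(i+1)) = y (2*i+2) := by norm_num [show 2*(i+1) = 2*i+2 by ring]
      nlinarith [hmem.2]
    · intro i hi
      obtain ⟨hmem, heq⟩ := hξ i hi
      have h1 : 2*i+1 < 2^(n-m) := by omega
      have h0 : 2*i < 2^(n-m) := by omega
      have hgap := hygap (2*i) h1
      have hd : h ≤ y (2*i+1) - y (2*i) := by linarith
      have hdpos : 0 < y (2*i+1) - y (2*i) := lt_of_lt_of_le hh hd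
      rw [heq, abs_div, abs_of_pos hdpos]
      have hnum : |φ m (y (2*i+1)) - φ m (y (2*i))| ≤ 2 * ((2/h)^m * Δ) := by
        have := hybd _ h1
        have := hybd _ h0
        calc |φ m (y (2*i+1)) - φ m (y (2*i))| ≤ |φ m (y (2*i+1))| + |φ m (y (2*i))| := abs_sub _ _
          _ ≤ 2 * ((2/h)^m * Δ) := by linarith
      have hΔ : 0 ≤ (2/h)^m * Δ := by
        rcases le_or_gt 0 Δ with hΔ | hΔ
        · positivity
        · nlinarith [abs_nonneg (φ m (y (2*i))), hybd _ h0]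
      calc |φ m (y (2*i+1)) - φ m (y (2*i))| / (y (2*i+1) - y (2*i))
          ≤ 2 * ((2/h)^m * Δ) / h := by
            exact div_le_div₀ (by linarith) hnum hh hd
        _ = (2/h)^(m+1) * Δ := by ring


lemma phi_deriv {s : ℕ} (a α : Fin s → ℝ) (m : ℕ) (x : ℝ) :
    HasDerivAt (fun u => ∑ j, a j * α j ^ m * Real.exp (α j * u))
      (∑ j, a j * α j ^ (m+1) * Real.exp (α j * x)) x := by
  have : ∀ j : Fin s, HasDerivAt (fun u => a j * α j ^ m * Real.exp (α j * u))
      (a j * α j ^ (m+1) * Real.exp (α j * x)) x := by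
    intro j
    have h1 : HasDerivAt (fun u : ℝ => α j * u) (α j) x := by
      simpa using (hasDerivAt_id x).const_mul (α j)
    have h2 : HasDerivAt (fun u => Real.exp (α j * u)) (Real.exp (α j * x) * α j) x :=
      (Real.hasDerivAt_exp (α j * x)).comp x h1
    have := h2.const_mul (a j * α j ^ m)
    refine this.congr_deriv ?_
    ring
  simpa using HasDerivAt.fun_sum (fun j _ => this j)

lemma poly_stuff {s : ℕ} (hs : 2 ≤ s) (α : Fin s → ℝ) (hinj : Function.Injective α)
    (j0 : Fin s) (a : Fin s → ℝ) (u : ℝ) :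
    let P : Polynomial ℝ := ∏ i ∈ Finset.univ.erase j0, (X - C (α i))
    (∑ m ∈ Finset.range s, P.coeff m * ∑ j, a j * α j ^ m * Real.exp (α j * u))
      = a j0 * P.eval (α j0) * Real.exp (α j0 * u) ∧ P.eval (α j0) ≠ 0 := by
  intro P
  have hdeg : P.natDegree = s - 1 := by
    have : P.natDegree = ∑ i ∈ Finset.univ.erase j0, (X - C (α i)).natDegree := by
      apply Polynomial.natDegree_prod
      intro i _
      exact X_sub_C_ne_zero (α i)
    simp [this, Polynomial.natDegree_X_sub_C, Finset.card_erase_of_mem]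
  have heval : ∀ x : ℝ, P.eval x = ∏ i ∈ Finset.univ.erase j0, (x - α i) := by
    intro x; simp [P, Polynomial.eval_prod]
  have hne : P.eval (α j0) ≠ 0 := by
    rw [heval]
    apply Finset.prod_ne_zero_iff.mpr
    intro i hi
    have : i ≠ j0 := Finset.ne_of_mem_erase hi
    have : α i ≠ α j0 := fun h => this (hinj h)
    intro h; apply this; linarith [sub_eq_zero.mp h]
  refine ⟨?_, hne⟩
  have hzero : ∀ j : Fin s, j ≠ j0 → P.eval (α j) = 0 := by
    intro j hj
    rw [heval]
    exact Finset.prod_eq_zero (Finset.mem_erase.mpr ⟨hj, Finset.mem_univ j⟩) (by ring)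
  have hdeg' : P.natDegree < s := by rw [hdeg]; omega
  calc (∑ m ∈ Finset.range s, P.coeff m * ∑ j, a j * α j ^ m * Real.exp (α j * u))
      = ∑ m ∈ Finset.range s, ∑ j, P.coeff m * α j ^ m * (a j * Real.exp (α j * u)) := by
        congr 1; ext m
        rw [Finset.mul_sum]
        congr 1; ext j; ring
    _ = ∑ j, (∑ m ∈ Finset.range s, P.coeff m * α j ^ m) * (a j * Real.exp (α j * u)) := by
        rw [Finset.sum_comm]
        congr 1; ext j
        rw [Finset.sum_mul]
    _ = ∑ j, P.eval (α j) * (a j * Real.exp (α j * u)) := by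
        congr 1; ext j
        rw [Polynomial.eval_eq_sum_range' hdeg']
    _ = a j0 * P.eval (α j0) * Real.exp (α j0 * u) := by
        rw [Finset.sum_eq_single j0]
        · ring
        · intro j _ hj; rw [hzero j hj]; ring
        · intro h; exact absurd (Finset.mem_univ j0) h

end Aux

set_option maxHeartbeats 2000000 in
theorem stmt5 (s : ℕ) (hs : 2 ≤ s) (α : Fin s → ℝ) (hinj : Function.Injective α)
    (hint : ∀ j, ∀ m : ℤ, α j ≠ (m : ℝ)) :
    ∃ K : ℝ, 0 < K ∧ ∀ (a : Fin s → ℝ), (∀ j, a j ≠ 0) → ∀ Δ : ℝ, 0 < Δ →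
      ∀ c d : ℝ, 1 ≤ c → c ≤ d → d ≤ 2 →
        (∀ t ∈ Set.Icc c d, |∑ j, a j * t ^ (α j)| ≤ Δ) →
        d - c ≤ K * (Δ / ∑ j, |a j|) ^ (1 / ((s : ℝ) - 1)) := by
  classical
  haveI : Nonempty (Fin s) := ⟨⟨0, by omega⟩⟩
  set A : ℝ := 1 + ∑ j, |α j| with hA_def
  have hA1 : 1 ≤ A := by
    have : 0 ≤ ∑ j, |α j| := Finset.sum_nonneg fun j _ => abs_nonneg _
    simp [hA_def]; linarith
  have hAj : ∀ j, |α j| ≤ A := by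
    intro j
    have : |α j| ≤ ∑ j, |α j| :=
      Finset.single_le_sum (fun j _ => abs_nonneg (α j)) (Finset.mem_univ j)
    simp [hA_def]; linarith
  set B : ℝ := A ^ s * Real.exp A with hB_def
  have hB : 0 < B := by positivity
  set P : Fin s → Polynomial ℝ := fun j => ∏ i ∈ Finset.univ.erase j, (X - C (α i)) with hP_def
  set κ : ℝ := Finset.univ.inf' Finset.univ_nonempty (fun j => |(P j).eval (α j)|) with hκ_def
  have hκpos : 0 < κ := by
    rw [hκ_def, Finset.lt_inf'_iff]
    intro j _
    have := (poly_stuff hs α hinj j (fun _ => 0) 0).2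
    exact abs_pos.mpr this
  have hκle : ∀ j, κ ≤ |(P j).eval (α j)| := fun j =>
    Finset.inf'_le _ (Finset.mem_univ j)
  set Cc : ℝ := 1 + ∑ j, ∑ m ∈ Finset.range s, |(P j).coeff m| with hCc_def
  have hCc1 : 1 ≤ Cc := by
    have : (0:ℝ) ≤ ∑ j, ∑ m ∈ Finset.range s, |(P j).coeff m| :=
      Finset.sum_nonneg fun j _ => Finset.sum_nonneg fun m _ => abs_nonneg _
    simp [hCc_def]; linarith
  have hCcj : ∀ j, ∑ m ∈ Finset.range s, |(P j).coeff m| ≤ Cc := by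
    intro j
    have h1 : ∑ m ∈ Finset.range s, |(P j).coeff m| ≤
        ∑ j', ∑ m ∈ Finset.range s, |(P j').coeff m| :=
      Finset.single_le_sum (f := fun j' => ∑ m ∈ Finset.range s, |(P j').coeff m|)
        (fun j' _ => Finset.sum_nonneg fun m _ => abs_nonneg _) (Finset.mem_univ j)
    simp [hCc_def]; linarith
  have hCc0 : 0 < Cc := by linarith
  set c₀ : ℝ := κ * Real.exp (-A) / (2 * s * Cc * B) with hc₀_def
  have hspos : (0:ℝ) < s := by positivity
  have hc₀ : 0 < c₀ := by
    rw [hc₀_def]; positivity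
  set C₄ : ℝ := 2 * s * Cc * 2 ^ ((s+1)*(s-1)) * Real.exp A / κ with hC₄_def
  have hC₄ : 0 < C₄ := by rw [hC₄_def]; positivity
  set M : ℝ := max 1 (1/c₀) with hM_def
  have hM1 : 1 ≤ M := le_max_left _ _
  set K : ℝ := 2 * M * C₄ ^ (1/((s:ℝ)-1)) with hK_def
  have hsr : (0:ℝ) < (s:ℝ) - 1 := by
    have : (2:ℝ) ≤ s := by exact_mod_cast hs
    linarith
  have hK : 0 < K := by
    rw [hK_def]
    have := Real.rpow_pos_of_pos hC₄ (1/((s:ℝ)-1))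
    positivity
  clear_value A B P κ Cc c₀ C₄ M K
  refine ⟨K, hK, ?_⟩
  intro a ha Δ hΔ c d hc1 hcd hd2 hbd
  set Sa : ℝ := ∑ j, |a j| with hS_def
  have hS : 0 < Sa := by
    apply Finset.sum_pos (fun j _ => abs_pos.mpr (ha j)) Finset.univ_nonempty
  have hrhs0 : 0 ≤ (Δ / Sa) ^ (1/((s:ℝ)-1)) := Real.rpow_nonneg (by positivity) _
  rcases eq_or_lt_of_le hcd with rfl | hcd'
  · simp only [sub_self]
    positivity
  -- c < d case
  have hcpos : (0:ℝ) < c := by linarith only [hc1]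
  have hdpos : (0:ℝ) < d := by linarith only [hc1, hcd]
  set u₀ : ℝ := Real.log c with hu₀_def
  set u₁ : ℝ := Real.log d with hu₁_def
  have hexpu₀ : Real.exp u₀ = c := Real.exp_log hcpos
  have hexpu₁ : Real.exp u₁ = d := Real.exp_log hdpos
  have hu₀0 : 0 ≤ u₀ := Real.log_nonneg hc1
  have hu₁1 : u₁ ≤ 1 := by
    have := Real.log_le_sub_one_of_pos hdpos
    linarith only [this, hd2]
  set L : ℝ := u₁ - u₀ with hL_def
  have hLpos : 0 < L := by
    have := Real.log_lt_log hcpos hcd'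
    rw [hL_def]; linarith only [this]
  have hL1 : L ≤ 1 := by rw [hL_def]; linarith only [hu₁1, hu₀0]
  set ℓ : ℝ := min L c₀ with hℓ_def
  have hℓpos : 0 < ℓ := lt_min hLpos hc₀
  have hℓL : ℓ ≤ L := min_le_left _ _
  have hℓc₀ : ℓ ≤ c₀ := min_le_right _ _
  have hℓ1 : ℓ ≤ 1 := hℓL.trans hL1
  set h : ℝ := ℓ / 2 ^ s with hh_def
  clear_value Sa u₀ u₁ L ℓ h
  have hh : 0 < h := by rw [hh_def]; positivity
  have h2h : (2:ℝ)^(s-1) * h ≤ ℓ := by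
    rw [hh_def]
    rw [div_eq_mul_inv, ← mul_assoc]
    have : (2:ℝ)^(s-1) ≤ 2^s := pow_le_pow_right₀ (by norm_num) (by omega)
    have h2s : (0:ℝ) < 2^s := by positivity
    calc (2:ℝ)^(s-1) * ℓ * (2^s)⁻¹ ≤ 2^s * ℓ * (2^s)⁻¹ := by
          apply mul_le_mul_of_nonneg_right (mul_le_mul_of_nonneg_right this hℓpos.le)
          positivity
      _ = ℓ := by field_simp
  set φ : ℕ → ℝ → ℝ := fun m u => ∑ j, a j * α j ^ m * Real.exp (α j * u) with hφ_def
  have hφd : ∀ m x, HasDerivAt (φ m) (φ (m+1) x) x := fun m x => phi_deriv a α m x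
  set W : Set ℝ := Set.Icc u₀ (u₀ + 2^(s-1) * h) with hW_def
  clear_value φ
  have hWsub : W ⊆ Set.Icc u₀ u₁ := by
    apply Set.Icc_subset_Icc le_rfl
    have : ℓ ≤ L := hℓL
    rw [hL_def] at this
    linarith only [h2h, this]
  -- pointwise bound on φ 0 on W
  have hbd' : ∀ u ∈ W, |φ 0 u| ≤ Δ := by
    intro u hu
    have hu' := hWsub hu
    set t : ℝ := Real.exp u with ht_def
    have htc : c ≤ t := by
      rw [ht_def, ← hexpu₀]
      exact Real.exp_le_exp.mpr hu'.1
    have htd : t ≤ d := by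
      rw [ht_def, ← hexpu₁]
      exact Real.exp_le_exp.mpr hu'.2
    have := hbd t ⟨htc, htd⟩
    have htpos : 0 < t := Real.exp_pos u
    have : ∑ j, a j * t ^ (α j) = φ 0 u := by
      rw [hφ_def]
      apply Finset.sum_congr rfl
      intro j _
      rw [Real.rpow_def_of_pos htpos, ht_def, Real.log_exp]
      ring_nf
    rw [← this]
    exact hbd t ⟨htc, htd⟩
  -- derivative bounds
  have hφbd : ∀ m, m ≤ s → ∀ u ∈ W, |φ m u| ≤ B * Sa := by
    intro m hm u hu
    have hu' := hWsub hu
    have hu0 : 0 ≤ u := hu₀0.trans hu'.1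
    have hu1 : u ≤ 1 := hu'.2.trans hu₁1
    rw [hφ_def]
    calc |∑ j, a j * α j ^ m * Real.exp (α j * u)|
        ≤ ∑ j, |a j * α j ^ m * Real.exp (α j * u)| := Finset.abs_sum_le_sum_abs _ _
      _ ≤ ∑ j, |a j| * B := by
          apply Finset.sum_le_sum
          intro j _
          rw [abs_mul, abs_mul]
          have h1 : |α j ^ m| ≤ A ^ s := by
            rw [abs_pow]
            calc |α j| ^ m ≤ A ^ m := pow_le_pow_left₀ (abs_nonneg _) (hAj j) m
              _ ≤ A ^ s := pow_le_pow_right₀ hA1 hm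
          have h2 : |Real.exp (α j * u)| ≤ Real.exp A := by
            rw [abs_of_pos (Real.exp_pos _), Real.exp_le_exp]
            calc α j * u ≤ |α j * u| := le_abs_self _
              _ = |α j| * u := by rw [abs_mul, abs_of_nonneg hu0]
              _ ≤ A * 1 := mul_le_mul (hAj j) hu1 hu0 (by linarith only [hA1])
              _ = A := mul_one A
          calc |a j| * |α j ^ m| * |Real.exp (α j * u)|
              ≤ |a j| * (A^s) * Real.exp A := by
                apply mul_le_mul (mul_le_mul_of_nonneg_left h1 (abs_nonneg _)) h2
                  (abs_nonneg _)
                positivity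
            _ = |a j| * B := by rw [hB_def]; ring
      _ = B * Sa := by rw [← Finset.sum_mul, hS_def]; ring
  -- cascade: for each m ≤ s-1 get a point
  have hcas : ∀ m, m ≤ s - 1 → ∃ ξ ∈ W, |φ m ξ| ≤ (2/h)^m * Δ := by
    intro m hm
    obtain ⟨y, hymem, _, hybd⟩ := cascade φ hφd Δ h u₀ hh (s-1) hbd' m hm
    have h0 : 0 < 2^(s-1-m) := by positivity
    exact ⟨y 0, hymem 0 h0, hybd 0 h0⟩
  -- sync to u₀
  have hu₀W : u₀ ∈ W := by
    rw [hW_def]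
    exact Set.left_mem_Icc.mpr (le_add_of_nonneg_right (by positivity))
  have hsync : ∀ m, m ≤ s - 1 → |φ m u₀| ≤ (2/h)^m * Δ + B * Sa * ℓ := by
    intro m hm
    obtain ⟨ξ, hξW, hξbd⟩ := hcas m hm
    have hdiff : |φ m u₀ - φ m ξ| ≤ B * Sa * ℓ := by
      have hconv : Convex ℝ W := convex_Icc _ _
      have := hconv.norm_image_sub_le_of_norm_hasDerivWithin_le
        (f := φ m) (f' := φ (m+1)) (C := B * Sa)
        (fun x _ => (hφd m x).hasDerivWithinAt)
        (fun x hx => by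
          rw [Real.norm_eq_abs]
          exact mul_comm B Sa ▸ (by simpa [mul_comm] using hφbd (m+1) (by omega) x hx))
        hξW hu₀W
      rw [Real.norm_eq_abs, Real.norm_eq_abs] at this
      calc |φ m u₀ - φ m ξ| ≤ B * Sa * |u₀ - ξ| := this
        _ ≤ B * Sa * ℓ := by
            apply mul_le_mul_of_nonneg_left _ (by positivity)
            rw [abs_sub_comm, abs_of_nonneg (by linarith only [hξW.1] : (0:ℝ) ≤ ξ - u₀)]
            have h2 := hξW.2
            linarith only [h2h, h2, hξW.1]
    calc |φ m u₀| ≤ |φ m u₀ - φ m ξ| + |φ m ξ| := by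
          have := abs_sub_abs_le_abs_sub (φ m u₀) (φ m ξ)
          have h2 := abs_add_le (φ m u₀ - φ m ξ) (φ m ξ)
          simp at h2 ⊢
          calc |φ m u₀| = |(φ m u₀ - φ m ξ) + φ m ξ| := by ring_nf
            _ ≤ |φ m u₀ - φ m ξ| + |φ m ξ| := abs_add_le _ _
      _ ≤ B * Sa * ℓ + (2/h)^m * Δ := add_le_add hdiff hξbd
      _ = (2/h)^m * Δ + B * Sa * ℓ := by ring
  -- pick max coefficient index
  obtain ⟨j0, _, hj0⟩ := Finset.exists_max_image Finset.univ (fun j => |a j|)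
    Finset.univ_nonempty
  have hSs : Sa ≤ s * |a j0| := by
    rw [hS_def]
    calc ∑ j, |a j| ≤ ∑ _j : Fin s, |a j0| :=
          Finset.sum_le_sum fun j _ => hj0 j (Finset.mem_univ j)
      _ = s * |a j0| := by simp [mul_comm]
  obtain ⟨hident0, hne0⟩ := poly_stuff hs α hinj j0 a u₀
  have hident : (∑ m ∈ Finset.range s, (P j0).coeff m * φ m u₀)
      = a j0 * (P j0).eval (α j0) * Real.exp (α j0 * u₀) := by
    rw [hP_def, hφ_def]; exact hident0
  -- lower bound
  have hexplow : Real.exp (-A) ≤ Real.exp (α j0 * u₀) := by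
    rw [Real.exp_le_exp]
    have : |α j0 * u₀| ≤ A := by
      rw [abs_mul, abs_of_nonneg hu₀0]
      calc |α j0| * u₀ ≤ A * 1 := mul_le_mul (hAj j0) (show u₀ ≤ 1 by linarith only [hu₁1, hLpos, hL_def]) hu₀0 (by linarith only [hA1])
        _ = A := mul_one A
    linarith only [this, neg_abs_le (α j0 * u₀)]
  have hlow : κ * (Sa / s) * Real.exp (-A) ≤ |a j0 * (P j0).eval (α j0) * Real.exp (α j0 * u₀)| := by
    rw [abs_mul, abs_mul, abs_of_pos (Real.exp_pos _)]
    have h1 : Sa / s ≤ |a j0| := by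
      rw [div_le_iff₀ hspos]
      linarith only [hSs]
    have h2 : κ ≤ |(P j0).eval (α j0)| := hκle j0
    have hSs0 : 0 ≤ Sa / s := by positivity
    calc κ * (Sa / s) * Real.exp (-A)
        ≤ |(P j0).eval (α j0)| * |a j0| * Real.exp (α j0 * u₀) := by
          apply mul_le_mul (mul_le_mul h2 h1 hSs0 (abs_nonneg _)) hexplow
            (Real.exp_pos _).le
          positivity
      _ = |a j0| * |(P j0).eval (α j0)| * Real.exp (α j0 * u₀) := by ring
  -- upper bound
  have h2h1 : (1:ℝ) ≤ 2 / h := by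
    rw [le_div_iff₀ hh]
    have : h ≤ 1 := by
      rw [hh_def]
      calc ℓ / 2^s ≤ 1 / 1 := by
            apply div_le_div₀ (by norm_num) hℓ1 (by norm_num)
            calc (1:ℝ) = 1^s := (one_pow s).symm
              _ ≤ 2^s := pow_le_pow_left₀ (by norm_num) (by norm_num) s
      _ = 1 := by norm_num
    linarith only [this]
  have hupper : |a j0 * (P j0).eval (α j0) * Real.exp (α j0 * u₀)| ≤
      Cc * ((2/h)^(s-1) * Δ + B * Sa * ℓ) := by
    rw [← hident]
    calc |∑ m ∈ Finset.range s, (P j0).coeff m * φ m u₀|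
        ≤ ∑ m ∈ Finset.range s, |(P j0).coeff m * φ m u₀| := Finset.abs_sum_le_sum_abs _ _
      _ ≤ ∑ m ∈ Finset.range s, |(P j0).coeff m| * ((2/h)^(s-1) * Δ + B * Sa * ℓ) := by
          apply Finset.sum_le_sum
          intro m hm
          rw [abs_mul]
          apply mul_le_mul_of_nonneg_left _ (abs_nonneg _)
          have hms : m ≤ s - 1 := by
            have := Finset.mem_range.mp hm; omega
          calc |φ m u₀| ≤ (2/h)^m * Δ + B * Sa * ℓ := hsync m hms
            _ ≤ (2/h)^(s-1) * Δ + B * Sa * ℓ := by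
                apply add_le_add_left
                apply mul_le_mul_of_nonneg_right _ hΔ.le
                exact pow_le_pow_right₀ h2h1 hms
      _ = (∑ m ∈ Finset.range s, |(P j0).coeff m|) * ((2/h)^(s-1) * Δ + B * Sa * ℓ) := by
          rw [← Finset.sum_mul]
      _ ≤ Cc * ((2/h)^(s-1) * Δ + B * Sa * ℓ) := by
          apply mul_le_mul_of_nonneg_right (hCcj j0)
          positivity
  -- combine
  have hcomb : κ * (Sa / s) * Real.exp (-A) ≤ Cc * ((2/h)^(s-1) * Δ + B * Sa * ℓ) :=
    hlow.trans hupper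
  have hsne : (s:ℝ) ≠ 0 := hspos.ne'
  have hcomb' : κ * Sa * Real.exp (-A) ≤
      s * Cc * ((2/h)^(s-1) * Δ) + s * Cc * (B * Sa * ℓ) := by
    have h1 := mul_le_mul_of_nonneg_left hcomb hspos.le
    have h2 : (s:ℝ) * (κ * (Sa/s) * Real.exp (-A)) = κ * Sa * Real.exp (-A) := by
      field_simp
    rw [h2] at h1
    calc κ * Sa * Real.exp (-A) ≤ s * (Cc * ((2/h)^(s-1) * Δ + B * Sa * ℓ)) := h1
      _ = s * Cc * ((2/h)^(s-1) * Δ) + s * Cc * (B * Sa * ℓ) := by ring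
  have hsmall : 2 * s * Cc * (B * Sa * ℓ) ≤ κ * Sa * Real.exp (-A) := by
    have h1 : 2 * (s:ℝ) * Cc * (B * Sa * ℓ) ≤ 2 * s * Cc * (B * Sa * c₀) := by
      have h0 : (0:ℝ) ≤ 2 * s * Cc * (B * Sa) := by positivity
      calc 2 * (s:ℝ) * Cc * (B * Sa * ℓ) = 2 * s * Cc * (B * Sa) * ℓ := by ring
        _ ≤ 2 * s * Cc * (B * Sa) * c₀ := mul_le_mul_of_nonneg_left hℓc₀ h0
        _ = 2 * s * Cc * (B * Sa * c₀) := by ring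
    have h2 : 2 * (s:ℝ) * Cc * (B * Sa * c₀) = κ * Sa * Real.exp (-A) := by
      rw [hc₀_def]
      field_simp
    linarith only [h1, h2]
  have hmain : κ * Sa * Real.exp (-A) ≤ 2 * s * Cc * ((2/h)^(s-1) * Δ) := by
    linarith only [hcomb', hsmall]
  have hhl : (2/h) * ℓ = 2^(s+1) := by
    rw [hh_def, div_div_eq_mul_div, div_mul_cancel₀ _ hℓpos.ne', pow_succ]
    ring
  have hpowmul : (2/h)^(s-1) * ℓ^(s-1) = 2^((s+1)*(s-1)) := by
    rw [← mul_pow, hhl, ← pow_mul]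
  have hD : κ * Sa * Real.exp (-A) * ℓ^(s-1) ≤ 2 * s * Cc * 2^((s+1)*(s-1)) * Δ := by
    have hlq : (0:ℝ) ≤ ℓ^(s-1) := by positivity
    have := mul_le_mul_of_nonneg_right hmain hlq
    calc κ * Sa * Real.exp (-A) * ℓ^(s-1)
        ≤ 2 * s * Cc * ((2/h)^(s-1) * Δ) * ℓ^(s-1) := this
      _ = 2 * s * Cc * Δ * ((2/h)^(s-1) * ℓ^(s-1)) := by ring
      _ = 2 * s * Cc * Δ * 2^((s+1)*(s-1)) := by rw [hpowmul]
      _ = 2 * s * Cc * 2^((s+1)*(s-1)) * Δ := by ring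
  have hq : ℓ^(s-1) ≤ C₄ * (Δ / Sa) := by
    have hpos : (0:ℝ) < κ * Sa * Real.exp (-A) := by positivity
    have h1 : ℓ^(s-1) ≤ 2 * s * Cc * 2^((s+1)*(s-1)) * Δ / (κ * Sa * Real.exp (-A)) := by
      rw [le_div_iff₀ hpos]
      linarith only [hD]
    have h2 : 2 * (s:ℝ) * Cc * 2^((s+1)*(s-1)) * Δ / (κ * Sa * Real.exp (-A))
        = C₄ * (Δ / Sa) := by
      rw [hC₄_def, Real.exp_neg]
      have he : Real.exp A ≠ 0 := (Real.exp_pos A).ne'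
      field_simp
    rw [← h2]
    exact h1
  -- take (s-1)-th root
  have hroot : ℓ ≤ (C₄ * (Δ / Sa)) ^ (1/((s:ℝ)-1)) := by
    have hcast : ((s-1 : ℕ) : ℝ) = (s:ℝ) - 1 := by
      have : 1 ≤ s := by omega
      push_cast [this]
      ring
    have h1 : ℓ ^ ((s:ℝ)-1) ≤ C₄ * (Δ / Sa) := by
      rw [← hcast, Real.rpow_natCast]
      exact hq
    have h2 := Real.rpow_le_rpow (Real.rpow_nonneg hℓpos.le _) h1
      (by positivity : (0:ℝ) ≤ 1/((s:ℝ)-1))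
    rwa [← Real.rpow_mul hℓpos.le, mul_one_div, div_self hsr.ne',
      Real.rpow_one] at h2
  have hLM : L ≤ M * ℓ := by
    rcases le_total L c₀ with hc | hc
    · have : ℓ = L := by rw [hℓ_def]; exact min_eq_left hc
      rw [this]
      nlinarith only [hLpos, hM1]
    · have hℓeq : ℓ = c₀ := by rw [hℓ_def]; exact min_eq_right hc
      have : 1/c₀ ≤ M := by rw [hM_def]; exact le_max_right _ _
      calc L ≤ 1 := hL1
        _ = (1/c₀) * c₀ := by field_simp
        _ ≤ M * ℓ := by
            rw [hℓeq]
            exact mul_le_mul_of_nonneg_right this hc₀.le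
  -- d - c ≤ 2 L
  have hdc2L : d - c ≤ 2 * L := by
    obtain ⟨ξ, hξ, hξeq⟩ := exists_hasDerivAt_eq_slope Real.log (fun x => x⁻¹) hcd'
      (fun x hx => (Real.continuousAt_log (by rintro rfl; exact absurd hx.1 (by norm_num; linarith only [hc1])) ).continuousWithinAt)
      (fun x hx => Real.hasDerivAt_log (by rintro rfl; exact absurd hx.1 (by norm_num; linarith only [hc1])))
    have hξ2 : ξ ≤ 2 := by linarith only [hξ.2, hd2]
    have hξpos : 0 < ξ := by linarith only [hξ.1, hc1]
    have : L = (d - c) * ξ⁻¹ := by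
      rw [hL_def, hu₁_def, hu₀_def]
      rw [hξeq]
      rw [mul_div_assoc']
      rw [mul_comm]
      rw [mul_div_assoc]
      rw [div_self (by linarith only [hcd'] : d - c ≠ 0)]
      rw [mul_one]
    rw [this]
    have hinv : (2:ℝ)⁻¹ ≤ ξ⁻¹ := by
      apply inv_anti₀ hξpos hξ2
    have h1 : (d - c) * (2:ℝ)⁻¹ ≤ (d - c) * ξ⁻¹ :=
      mul_le_mul_of_nonneg_left hinv (by linarith only [hcd'])
    linarith only [h1]
  -- final chain
  calc d - c ≤ 2 * L := hdc2L
    _ ≤ 2 * (M * ℓ) := by linarith only [hLM]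
    _ ≤ 2 * (M * (C₄ * (Δ / Sa)) ^ (1/((s:ℝ)-1))) := by
        apply mul_le_mul_of_nonneg_left _ (by norm_num)
        exact mul_le_mul_of_nonneg_left hroot (by linarith only [hM1])
    _ = K * (Δ / Sa) ^ (1/((s:ℝ)-1)) := by
        rw [hK_def, Real.mul_rpow hC₄.le (by positivity)]
        ring
end
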